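/- Let K ⊆ ℝ^d be a closed convex set, μ > 0, and let g_h, …, g_{T−1} : ℝ^d → ℝ be differentiable and μ-strongly convex. Let x* ∈ K, and let x_{t+1} = Π_K(x_t − η_t ∇f_t(x_t)) where Π_K is the Euclidean projection onto K, η_t = 2/(μ t) for t ≥ 1, and ∇f_t(x_t) = ∇g_t(x_t) + ε_t for error vectors ε_t. Suppose ‖x − x*‖ ≤ 2R for all x ∈ K. Then ∑_{t=h}^{T−1}(g_t(x_t) − g_t(x*)) ≤ −(μ/4)∑_{t=h}^{T−1}‖x_t − x*‖² + 2R²μh + ∑_{t=h}^{T−1}(η_t/2)‖∇f_t(x_t)‖² − ∑_{t=h}^{T−1}⟨ε_t, x_t − x*⟩. -/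

import Mathlib

set_option maxHeartbeats 1000000 in
/-- Regret bound for projected online gradient descent with `μ`-strongly convex
functions: with `K` closed convex, `x_{t+1} = Π_K(x_t − η_t ∇f_t(x_t))` (encoded by the
variational characterization of the Euclidean projection), `η_t = 2/(μt)`,
`∇f_t(x_t) = ∇g_t(x_t) + ε_t`, and `‖y − x*‖ ≤ 2R` on `K`,
`∑_{t=h}^{T−1}(g_t(x_t) − g_t(x*)) ≤ −(μ/4)∑‖x_t − x*‖² + 2R²μh + ∑(η_t/2)‖∇f_t(x_t)‖²
− ∑⟨ε_t, x_t − x*⟩`. -/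
theorem ogd_strongly_convex_regret {d : ℕ} (K : Set (EuclideanSpace ℝ (Fin d)))
    (hKclosed : IsClosed K) (hKconv : Convex ℝ K)
    (μ R : ℝ) (hμ : 0 < μ) (h T : ℕ) (hh : 1 ≤ h)
    (g : ℕ → EuclideanSpace ℝ (Fin d) → ℝ)
    (hgdiff : ∀ t, Differentiable ℝ (g t))
    (hgsc : ∀ t ∈ Finset.Ico h T, ∀ x y : EuclideanSpace ℝ (Fin d),
      (inner ℝ (gradient (g t) x) (y - x) : ℝ) + μ / 2 * ‖y - x‖ ^ 2 ≤ g t y - g t x)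
    (xstar : EuclideanSpace ℝ (Fin d)) (hxstar : xstar ∈ K)
    (x : ℕ → EuclideanSpace ℝ (Fin d)) (hxK : ∀ t, x t ∈ K)
    (ε : ℕ → EuclideanSpace ℝ (Fin d))
    (η : ℕ → ℝ) (hη : ∀ t : ℕ, 1 ≤ t → η t = 2 / (μ * t))
    (hproj : ∀ t : ℕ, ∀ y ∈ K,
      (inner ℝ (x t - η t • (gradient (g t) (x t) + ε t) - x (t + 1)) (y - x (t + 1)) : ℝ)
        ≤ 0)
    (hR : ∀ y ∈ K, ‖y - xstar‖ ≤ 2 * R) :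
    ∑ t ∈ Finset.Ico h T, (g t (x t) - g t xstar)
      ≤ -(μ / 4) * ∑ t ∈ Finset.Ico h T, ‖x t - xstar‖ ^ 2
        + 2 * R ^ 2 * μ * h
        + ∑ t ∈ Finset.Ico h T, (η t / 2) * ‖gradient (g t) (x t) + ε t‖ ^ 2
        - ∑ t ∈ Finset.Ico h T, (inner ℝ (ε t) (x t - xstar) : ℝ) := by
  have hR0 : 0 ≤ R := by
    have := hR xstar hxstar
    simp at this
    linarith
  -- trivial case: empty range
  by_cases hTh : T ≤ h
  · rw [Finset.Ico_eq_empty (by omega)]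
    simp
    positivity
  push_neg at hTh
  -- per-step inequality
  have hstep : ∀ t ∈ Finset.Ico h T,
      g t (x t) - g t xstar
        ≤ (‖x t - xstar‖ ^ 2 - ‖x (t+1) - xstar‖ ^ 2) * (μ * t / 4)
          - μ / 2 * ‖x t - xstar‖ ^ 2
          + η t / 2 * ‖gradient (g t) (x t) + ε t‖ ^ 2
          - (inner ℝ (ε t) (x t - xstar) : ℝ) := by
    intro t ht
    obtain ⟨ht1, ht2⟩ := Finset.mem_Ico.mp ht
    have ht1' : 1 ≤ t := le_trans hh ht1
    have htR : (1:ℝ) ≤ (t:ℝ) := by exact_mod_cast ht1'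
    have hμt : (0:ℝ) < μ * t := mul_pos hμ (by linarith)
    have hηt : η t = 2 / (μ * t) := hη t ht1'
    have hηpos : 0 < η t := by rw [hηt]; positivity
    set G := gradient (g t) (x t) + ε t with hG
    -- projection nonexpansiveness
    have hkey : ‖x (t+1) - xstar‖ ^ 2 ≤ ‖(x t - xstar) - η t • G‖ ^ 2 := by
      have hid : (x t - η t • G - x (t+1)) + (x (t+1) - xstar)
          = (x t - xstar) - η t • G := by abel
      have hexp := norm_add_sq_real (x t - η t • G - x (t+1)) (x (t+1) - xstar)
      rw [hid] at hexp
      have hip : (0:ℝ) ≤ (inner ℝ (x t - η t • G - x (t+1)) (x (t+1) - xstar) : ℝ) := by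
        have hp := hproj t xstar hxstar
        have hneg : xstar - x (t+1) = -(x (t+1) - xstar) := by abel
        rw [hneg, inner_neg_right] at hp
        linarith
      nlinarith [sq_nonneg ‖x t - η t • G - x (t+1)‖]
    have hexp2 : ‖(x t - xstar) - η t • G‖ ^ 2
        = ‖x t - xstar‖ ^ 2 - 2 * (η t * (inner ℝ (x t - xstar) G : ℝ))
          + (η t) ^ 2 * ‖G‖ ^ 2 := by
      rw [@norm_sub_sq_real, real_inner_smul_right, norm_smul, Real.norm_eq_abs,
        abs_of_pos hηpos]
      ring
    have h2 : 2 * (η t * (inner ℝ G (x t - xstar) : ℝ))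
        ≤ (‖x t - xstar‖ ^ 2 - ‖x (t+1) - xstar‖ ^ 2) + (η t) ^ 2 * ‖G‖ ^ 2 := by
      have hcomm : (inner ℝ (x t - xstar) G : ℝ) = inner ℝ G (x t - xstar) :=
        real_inner_comm _ _
      rw [hexp2, hcomm] at hkey
      linarith
    have h1 : (inner ℝ G (x t - xstar) : ℝ)
        ≤ (‖x t - xstar‖ ^ 2 - ‖x (t+1) - xstar‖ ^ 2) * (μ * t / 4)
          + η t / 2 * ‖G‖ ^ 2 := by
      set C := ‖x t - xstar‖ ^ 2 - ‖x (t+1) - xstar‖ ^ 2 with hC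
      have h3 : (inner ℝ G (x t - xstar) : ℝ) ≤ (C + (η t) ^ 2 * ‖G‖ ^ 2) / (2 * η t) := by
        rw [le_div_iff₀ (by positivity)]
        nlinarith [h2]
      have h4 : (C + (η t) ^ 2 * ‖G‖ ^ 2) / (2 * η t)
          = C * (μ * t / 4) + η t / 2 * ‖G‖ ^ 2 := by
        rw [hηt]
        field_simp
        ring
      linarith [h4 ▸ h3]
    -- strong convexity
    have hsc := hgsc t ht (x t) xstar
    have h5 : (inner ℝ (gradient (g t) (x t)) (xstar - x t) : ℝ)
        = - (inner ℝ (gradient (g t) (x t)) (x t - xstar) : ℝ) := by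
      rw [show xstar - x t = -(x t - xstar) by abel, inner_neg_right]
    have h6 : ‖xstar - x t‖ = ‖x t - xstar‖ := norm_sub_rev _ _
    rw [h5, h6] at hsc
    have h7 : (inner ℝ G (x t - xstar) : ℝ)
        = (inner ℝ (gradient (g t) (x t)) (x t - xstar) : ℝ)
          + (inner ℝ (ε t) (x t - xstar) : ℝ) := inner_add_left _ _ _
    linarith [h1, h7 ▸ h1]
  -- telescoping identity
  have htel : ∀ n : ℕ,
      ∑ t ∈ Finset.Ico h (h + n),
          (‖x t - xstar‖ ^ 2 - ‖x (t+1) - xstar‖ ^ 2) * (μ * t / 4)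
        = μ / 4 * ∑ t ∈ Finset.Ico h (h + n), ‖x t - xstar‖ ^ 2
          + ‖x h - xstar‖ ^ 2 * (μ * ((h:ℝ) - 1) / 4)
          - ‖x (h + n) - xstar‖ ^ 2 * (μ * (((h:ℝ) + n) - 1) / 4) := by
    intro n
    induction n with
    | zero => simp
    | succ n ih =>
      rw [show h + (n + 1) = (h + n) + 1 from rfl,
        Finset.sum_Ico_succ_top (by omega), Finset.sum_Ico_succ_top (by omega), ih]
      push_cast
      ring
  obtain ⟨n, rfl⟩ : ∃ n, T = h + n := ⟨T - h, by omega⟩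
  have hsum := Finset.sum_le_sum hstep
  have hsplit : ∑ t ∈ Finset.Ico h (h + n),
      ((‖x t - xstar‖ ^ 2 - ‖x (t+1) - xstar‖ ^ 2) * (μ * t / 4)
        - μ / 2 * ‖x t - xstar‖ ^ 2
        + η t / 2 * ‖gradient (g t) (x t) + ε t‖ ^ 2
        - (inner ℝ (ε t) (x t - xstar) : ℝ))
      = (∑ t ∈ Finset.Ico h (h + n),
          (‖x t - xstar‖ ^ 2 - ‖x (t+1) - xstar‖ ^ 2) * (μ * t / 4))
        - μ / 2 * ∑ t ∈ Finset.Ico h (h + n), ‖x t - xstar‖ ^ 2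
        + ∑ t ∈ Finset.Ico h (h + n), (η t / 2) * ‖gradient (g t) (x t) + ε t‖ ^ 2
        - ∑ t ∈ Finset.Ico h (h + n), (inner ℝ (ε t) (x t - xstar) : ℝ) := by
    rw [Finset.sum_sub_distrib, Finset.sum_add_distrib, Finset.sum_sub_distrib,
      Finset.mul_sum]
  rw [hsplit, htel n] at hsum
  have hhR : (1:ℝ) ≤ (h:ℝ) := by exact_mod_cast hh
  have hAh : ‖x h - xstar‖ ^ 2 ≤ 4 * R ^ 2 := by
    have := hR (x h) (hxK h)
    nlinarith [norm_nonneg (x h - xstar)]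
  have hhead : ‖x h - xstar‖ ^ 2 * (μ * ((h:ℝ) - 1) / 4) ≤ 2 * R ^ 2 * μ * h := by
    have h8 : 0 ≤ μ * ((h:ℝ) - 1) / 4 := by
      have := mul_nonneg hμ.le (by linarith : (0:ℝ) ≤ (h:ℝ) - 1)
      linarith
    have h9 : ‖x h - xstar‖ ^ 2 * (μ * ((h:ℝ) - 1) / 4)
        ≤ (4 * R ^ 2) * (μ * ((h:ℝ) - 1) / 4) := mul_le_mul_of_nonneg_right hAh h8
    have h10 : (4 * R ^ 2) * (μ * ((h:ℝ) - 1) / 4) ≤ 2 * R ^ 2 * μ * h := by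
      nlinarith [mul_nonneg hμ.le (sq_nonneg R), hhR]
    linarith
  have htail : 0 ≤ ‖x (h + n) - xstar‖ ^ 2 * (μ * (((h:ℝ) + n) - 1) / 4) := by
    have hn0 : (0:ℝ) ≤ (n:ℝ) := Nat.cast_nonneg n
    have : 0 ≤ μ * (((h:ℝ) + n) - 1) / 4 := by
      have := mul_nonneg hμ.le (by linarith : (0:ℝ) ≤ ((h:ℝ) + n) - 1)
      linarith
    exact mul_nonneg (sq_nonneg _) this
  linarith [hsum]
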